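/- Let X be a connected non-empty finite topological space and let A be a non-empty subspace of X. If the inclusion i : A → X is a Hurewicz cofibration, then A is a strong deformation retract of X; in particular, i is a homotopy equivalence. -/
import Mathlib


open unitInterval Topology Filter

set_option autoImplicit false

universe u v

/-- The specialization preorder: `x ≤ y` iff every open set containing `y` contains `x`. -/
def specLE {X : Type*} [TopologicalSpace X] (x y : X) : Prop :=
  ∀ U : Set X, IsOpen U → y ∈ U → x ∈ U

/-- A continuous map `i : A → X` is a (Hurewicz) cofibration iff it has the homotopy
extension property with respect to all topological spaces. -/
def IsCofibration {A : Type*} {X : Type*} [TopologicalSpace A] [TopologicalSpace X]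
    (i : C(A, X)) : Prop :=
  ∀ (Z : Type v) [TopologicalSpace Z] (f : C(X, Z)) (H : C(A × I, Z)),
    (∀ a, H (a, 0) = f (i a)) →
    ∃ G : C(X × I, Z),
      (∀ x, G (x, 0) = f x) ∧ ∀ a t, G (i a, t) = H (a, t)

/-- `x` is a down beat point of the subspace `S`:
the set of points of `S` strictly below `x` has a maximum. -/
def IsDownBeatPoint {X : Type*} [TopologicalSpace X] (S : Set X) (x : X) : Prop :=
  x ∈ S ∧ ∃ m ∈ S, m ≠ x ∧ specLE m x ∧
    ∀ z ∈ S, z ≠ x → specLE z x → specLE z m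

/-- `T` is a dbp–retract of `S`: `T` is obtained from `S` by successively
removing down beat points. -/
inductive IsDbpRetract {X : Type*} [TopologicalSpace X] : Set X → Set X → Prop
  | refl (S : Set X) : IsDbpRetract S S
  | step {S T : Set X} (x : X) (hx : IsDownBeatPoint S x)
      (h : IsDbpRetract (S \ {x}) T) : IsDbpRetract S T

/-- The minimal open set containing `x` (in a finite space): the intersection of all
open sets containing `x`. -/
def minOpen {X : Type*} [TopologicalSpace X] (x : X) : Set X :=
  ⋂₀ {U : Set X | IsOpen U ∧ x ∈ U}


section basics
variable {Y : Type*} [TopologicalSpace Y]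

lemma specLE_refl (x : Y) : specLE x x := fun _ _ h => h

lemma specLE_trans {x y z : Y} (h1 : specLE x y) (h2 : specLE y z) : specLE x z :=
  fun U hU hz => h1 U hU (h2 U hU hz)

lemma minOpen_isOpen [Finite Y] (x : Y) : IsOpen (minOpen x) :=
  Set.Finite.isOpen_sInter (Set.toFinite _) (fun _ h => h.1)

lemma mem_minOpen_self (x : Y) : x ∈ minOpen x := fun _ h => h.2

lemma specLE_iff_mem_minOpen [Finite Y] {z x : Y} : specLE z x ↔ z ∈ minOpen x := by
  constructor
  · intro h U hU; exact h U hU.1 hU.2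
  · intro h U hU hx; exact h U ⟨hU, hx⟩

lemma Continuous.specLE' {W : Type*} [TopologicalSpace W] {f : Y → W} (hf : Continuous f)
    {z y : Y} (h : specLE z y) : specLE (f z) (f y) := by
  intro U hU hy
  exact h _ (hU.preimage hf) hy

lemma specLE_t1 {a b : I} (h : specLE a b) : a = b := by
  by_contra hne
  have : b ∈ ({a}ᶜ : Set I) := by simpa using (Ne.symm hne)
  exact (h _ isOpen_compl_singleton this) rfl

lemma monotone_continuous [Finite Y] {W : Type*} [TopologicalSpace W] {f : Y → W}
    (hf : ∀ z y, specLE z y → specLE (f z) (f y)) : Continuous f := by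
  rw [continuous_def]
  intro U hU
  have : f ⁻¹' U = ⋃ y ∈ f ⁻¹' U, minOpen y := by
    ext z
    constructor
    · intro hz; exact Set.mem_biUnion hz (mem_minOpen_self z)
    · intro hz
      obtain ⟨y, hy, hzy⟩ := Set.mem_iUnion₂.1 hz
      exact hf z y (specLE_iff_mem_minOpen.2 hzy) U hU hy
  rw [this]
  exact isOpen_biUnion (fun y _ => minOpen_isOpen y)

lemma specLE_subtype {X : Type*} [TopologicalSpace X] {S : Set X} {z y : ↥S} :
    specLE z y ↔ specLE (z : X) (y : X) := by
  constructor
  · intro h U hU hy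
    exact h (Subtype.val ⁻¹' U) (hU.preimage continuous_subtype_val) hy
  · intro h V hV hy
    obtain ⟨U, hU, rfl⟩ := isOpen_induced_iff.1 hV
    exact h U hU hy

lemma specLE_prod {W : Type*} [TopologicalSpace W] {z y : Y} (h : specLE z y) (t : W) :
    specLE (z, t) (y, t) := by
  intro U hU hy
  obtain ⟨V1, V2, h1, h2, hm1, hm2, hsub⟩ := (isOpen_prod_iff.1 hU) y t hy
  exact hsub ⟨h V1 h1 hm1, hm2⟩

lemma exists_specLE_minimal {X : Type*} [TopologicalSpace X] [Finite X] (s : Set X)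
    (hs : s.Nonempty) : ∃ x ∈ s, ∀ z ∈ s, specLE z x → specLE x z := by
  suffices H : ∀ (n : ℕ) (s : Set X), s.ncard = n → s.Nonempty →
      ∃ x ∈ s, ∀ z ∈ s, specLE z x → specLE x z from H s.ncard s rfl hs
  intro n
  induction n using Nat.strong_induction_on with
  | _ n ih =>
    intro s hn hs
    have hfin : s.Finite := Set.toFinite s
    obtain ⟨x, hx⟩ := hs
    by_cases hmin : ∀ z ∈ s, specLE z x → specLE x z
    · exact ⟨x, hx, hmin⟩
    · push_neg at hmin
      obtain ⟨z, hz, hzx, hxz⟩ := hmin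
      set s' : Set X := {w ∈ s | specLE w x ∧ ¬ specLE x w} with hs'
      have hx' : x ∉ s' := fun h => h.2.2 (specLE_refl x)
      have hsub : s' ⊆ s := fun w hw => hw.1
      have hlt : s'.ncard < n := by
        rw [← hn]
        exact Set.ncard_lt_ncard (Set.ssubset_iff_of_subset hsub |>.2 ⟨x, hx, hx'⟩) hfin
      obtain ⟨m, hm, hmmin⟩ := ih s'.ncard hlt s' rfl ⟨z, hz, hzx, hxz⟩
      refine ⟨m, hsub hm, fun w hw hwm => ?_⟩
      have hw' : w ∈ s' := by
        refine ⟨hw, specLE_trans hwm hm.2.1, fun hxw => hm.2.2 (specLE_trans hxw hwm)⟩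
      exact hmmin w hw' hwm

end basics

lemma IsDbpRetract.subset {X : Type*} [TopologicalSpace X] {S T : Set X}
    (h : IsDbpRetract S T) : T ⊆ S := by
  induction h with
  | refl S => exact subset_rfl
  | step x hx h ih => exact ih.trans Set.diff_subset

lemma glue_continuous {Y W : Type*} [TopologicalSpace Y] [TopologicalSpace W]
    {K : Y × I → W} {g : Y → W} (hK : Continuous K) (hg : Continuous g)
    (hspec : ∀ y, specLE (K (y, 0)) (g y)) :
    Continuous (fun p : Y × I => if p.2 = 0 then g p.1 else K p) := by
  rw [continuous_def]
  intro U hU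
  have heq : (fun p : Y × I => if p.2 = 0 then g p.1 else K p) ⁻¹' U =
      (K ⁻¹' U ∩ {p : Y × I | p.2 ≠ 0}) ∪ (K ⁻¹' U ∩ (fun p : Y × I => g p.1) ⁻¹' U) := by
    ext ⟨y, t⟩
    by_cases ht : t = 0
    · subst ht
      simp only [Set.mem_preimage, Set.mem_union, Set.mem_inter_iff, Set.mem_setOf_eq,
        if_pos rfl, ne_eq, not_true_eq_false, and_false, false_or]
      exact ⟨fun h => ⟨hspec y U hU h, h⟩, fun h => h.2⟩
    · simp only [Set.mem_preimage, Set.mem_union, Set.mem_inter_iff, Set.mem_setOf_eq,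
        if_neg ht, ne_eq, ht, not_false_eq_true, and_true]
      tauto
  rw [heq]
  exact ((hK.isOpen_preimage U hU).inter
      ((isOpen_compl_singleton (x := (0:I))).preimage continuous_snd)).union
    ((hK.isOpen_preimage U hU).inter ((hg.comp continuous_fst).isOpen_preimage U hU))

lemma one_ne_zero_I : (1 : I) ≠ 0 := by
  intro h
  have := congrArg Subtype.val h
  norm_num at this

lemma dbp_SDR {X : Type*} [TopologicalSpace X] [Finite X] {S T : Set X}
    (h : IsDbpRetract S T) :
    ∃ F : C(↥S × I, X), (∀ s, F (s, 0) = ↑s) ∧ (∀ s, F (s, 1) ∈ T) ∧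
      ∀ s : ↥S, (↑s : X) ∈ T → ∀ t, F (s, t) = ↑s := by
  induction h with
  | refl S =>
    exact ⟨⟨fun p => ↑p.1, continuous_subtype_val.comp continuous_fst⟩,
      fun s => rfl, fun s => s.2, fun s _ t => rfl⟩
  | step x hx h ih =>
    rename_i S T
    classical
    obtain ⟨F', h0, h1, hfix⟩ := ih
    obtain ⟨hxS, m, hmS, hmx, hmle, hmax⟩ := hx
    set ρval : ↥S → X := fun s => if (↑s : X) = x then m else ↑s with hρval
    have hmono : ∀ z y : ↥S, specLE z y → specLE (ρval z) (ρval y) := by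
      intro z y hzy
      have hzy' : specLE (z : X) (y : X) := specLE_subtype.1 hzy
      by_cases hz : (↑z : X) = x <;> by_cases hy : (↑y : X) = x
      · simp only [hρval, if_pos hz, if_pos hy]; exact specLE_refl m
      · simp only [hρval, if_pos hz, if_neg hy]
        exact specLE_trans hmle (hz ▸ hzy')
      · simp only [hρval, if_neg hz, if_pos hy]
        exact hmax ↑z z.2 hz (hy ▸ hzy')
      · simp only [hρval, if_neg hz, if_neg hy]; exact hzy'
    have hρcont : Continuous ρval := monotone_continuous hmono
    have hρmem : ∀ s, ρval s ∈ S \ {x} := by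
      intro s
      by_cases hs : (↑s : X) = x
      · simp only [hρval, if_pos hs]; exact ⟨hmS, hmx⟩
      · simp only [hρval, if_neg hs]; exact ⟨s.2, hs⟩
    set ρ : ↥S → ↥(S \ {x}) := fun s => ⟨ρval s, hρmem s⟩ with hρ
    have hρc : Continuous ρ := hρcont.subtype_mk _
    set K : ↥S × I → X := fun p => F' (ρ p.1, p.2) with hK
    have hKc : Continuous K := F'.continuous.comp ((hρc.comp continuous_fst).prodMk continuous_snd)
    have hspec : ∀ s : ↥S, specLE (K (s, 0)) ((↑s : X)) := by
      intro s
      have : K (s, 0) = ρval s := h0 (ρ s)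
      rw [this]
      by_cases hs : (↑s : X) = x
      · simp only [hρval, if_pos hs]; exact hs ▸ hmle
      · simp only [hρval, if_neg hs]; exact specLE_refl _
    refine ⟨⟨fun p => if p.2 = 0 then ↑p.1 else K p,
      glue_continuous hKc continuous_subtype_val hspec⟩, fun s => if_pos rfl, ?_, ?_⟩
    · intro s
      simp only [ContinuousMap.coe_mk, if_neg one_ne_zero_I]
      exact h1 (ρ s, 1).1
    · intro s hsT t
      have hsx : (↑s : X) ≠ x := fun he => (h.subset hsT).2 (he ▸ rfl)
      have hρs : ρval s = ↑s := if_neg hsx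
      by_cases ht : t = 0
      · simp only [ContinuousMap.coe_mk, ht, if_pos rfl]; rfl
      · simp only [ContinuousMap.coe_mk, if_neg ht, hK]
        have := hfix (ρ s) (by rw [show ((ρ s : X)) = ↑s from hρs]; exact hsT) t
        rw [this, show ((ρ s : X)) = ↑s from hρs]

/-- the retraction-data predicate -/
def RetrData {X : Type u} [TopologicalSpace X] (A S : Set X) : Prop :=
  ∃ (α : ↥S × I → X) (β : ↥S × I → I), Continuous α ∧ Continuous β ∧
    (∀ p, α p ∈ S) ∧ (∀ p, β p = 0 ∨ α p ∈ A) ∧ (∀ s : ↥S, α (s, 0) = ↑s) ∧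
    (∀ s : ↥S, (↑s : X) ∈ A → ∀ t, α (s, t) = ↑s ∧ β (s, t) = t)

lemma main_dbp {X : Type u} [TopologicalSpace X] [Finite X] (A : Set X) (hA : A.Nonempty) :
    ∀ S : Set X, A ⊆ S → ConnectedSpace ↥S → RetrData A S → IsDbpRetract S A := by
  suffices H : ∀ (n : ℕ) (S : Set X), (S \ A).ncard = n → A ⊆ S → ConnectedSpace ↥S →
      RetrData A S → IsDbpRetract S A from fun S => H _ S rfl
  intro n
  induction n using Nat.strong_induction_on with
  | _ n ih =>
  intro S hn hAS hconn hP
  obtain ⟨α, β, hαc, hβc, hαS, hdisj, hα0, hAfix⟩ := hP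
  by_cases hSA : S ⊆ A
  · have hSeq : S = A := hSA.antisymm hAS
    exact hSeq ▸ IsDbpRetract.refl S
  -- basic consequences
  have hβeq : ∀ z y : ↥S, specLE (z : X) (y : X) → ∀ t, β (z, t) = β (y, t) := by
    intro z y hzy t
    exact specLE_t1 (hβc.specLE' (specLE_prod (specLE_subtype.2 hzy) t))
  have hαle : ∀ z y : ↥S, specLE (z : X) (y : X) → ∀ t, specLE (α (z, t)) (α (y, t)) := by
    intro z y hzy t
    exact hαc.specLE' (specLE_prod (specLE_subtype.2 hzy) t)
  set B : Set X := {x ∈ S | (minOpen x ∩ A).Nonempty} with hB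
  have hβt : ∀ x : ↥S, (↑x : X) ∈ B → ∀ t, β (x, t) = t := by
    intro x hx t
    obtain ⟨a, haU, haA⟩ := hx.2
    have haS : a ∈ S := hAS haA
    have h1 := hβeq ⟨a, haS⟩ x (specLE_iff_mem_minOpen.2 haU) t
    rw [← h1, (hAfix ⟨a, haS⟩ haA t).2]
  have hsmall : ∀ x : ↥S, ∃ t : I, t ≠ 0 ∧ α (x, t) ∈ minOpen (↑x : X) := by
    intro x
    have hc : Continuous fun t : I => α (x, t) := hαc.comp (continuous_const.prodMk continuous_id)
    have h0 : α (x, 0) ∈ minOpen (↑x : X) := by rw [hα0]; exact mem_minOpen_self _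
    have h1 : (fun t : I => α (x, t)) ⁻¹' minOpen (↑x : X) ∈ 𝓝[≠] (0 : I) :=
      nhdsWithin_le_nhds (((minOpen_isOpen _).preimage hc).mem_nhds h0)
    have h2 : {t : I | t ≠ 0} ∈ 𝓝[≠] (0 : I) := self_mem_nhdsWithin
    obtain ⟨t, ht1, ht2⟩ := Filter.nonempty_of_mem (Filter.inter_mem h1 h2)
    exact ⟨t, ht2, ht1⟩
  have hBdc : ∀ z ∈ S, ∀ x ∈ B, specLE z x → z ∈ B := by
    intro z hzS x hxB hzx
    obtain ⟨t, ht0, htU⟩ := hsmall ⟨z, hzS⟩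
    have hβz : β (⟨z, hzS⟩, t) = t := by
      rw [hβeq ⟨z, hzS⟩ ⟨x, hxB.1⟩ hzx t, hβt ⟨x, hxB.1⟩ hxB t]
    have hαA : α (⟨z, hzS⟩, t) ∈ A := (hdisj _).resolve_left (by rw [hβz]; exact ht0)
    exact ⟨hzS, ⟨α (⟨z, hzS⟩, t), htU, hαA⟩⟩
  have hBS : ∀ x ∈ S, x ∈ B := by
    set B' : Set ↥S := Subtype.val ⁻¹' B with hB'
    have hBc : ∀ x ∈ S, (x ∈ B ↔ x ∈ closure A) := by
      intro x hxS
      rw [mem_closure_iff]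
      constructor
      · rintro ⟨-, a, haU, haA⟩ o ho hxo
        exact ⟨a, specLE_iff_mem_minOpen.2 haU o ho hxo, haA⟩
      · intro h
        exact ⟨hxS, h _ (minOpen_isOpen x) (mem_minOpen_self x)⟩
    have hclosed : IsClosed B' := by
      have : B' = Subtype.val ⁻¹' closure A := by
        ext s; simp only [hB', Set.mem_preimage]; exact hBc ↑s s.2
      rw [this]; exact isClosed_closure.preimage continuous_subtype_val
    have hopen : IsOpen B' := by
      have : B' = Subtype.val ⁻¹' (⋃ x ∈ B, minOpen x) := by
        ext s
        simp only [hB', Set.mem_preimage]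
        constructor
        · intro h; exact Set.mem_biUnion h (mem_minOpen_self _)
        · intro h
          obtain ⟨x, hxB, hsx⟩ := Set.mem_iUnion₂.1 h
          exact hBdc ↑s s.2 x hxB (specLE_iff_mem_minOpen.2 hsx)
      rw [this]
      exact (isOpen_biUnion fun x _ => minOpen_isOpen x).preimage continuous_subtype_val
    obtain ⟨a, haA⟩ := hA
    have hne : B'.Nonempty := ⟨⟨a, hAS haA⟩, ⟨hAS haA, a, mem_minOpen_self a, haA⟩⟩
    have huniv : B' = Set.univ := IsClopen.eq_univ ⟨hclosed, hopen⟩ hne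
    intro x hxS
    have : (⟨x, hxS⟩ : ↥S) ∈ B' := huniv ▸ Set.mem_univ _
    exact this
  -- choose minimal point of S \ A
  obtain ⟨x, hxSA, hxmin⟩ := exists_specLE_minimal (S \ A)
    (Set.nonempty_of_ssubset (Set.ssubset_iff_of_subset hAS |>.2 (by
      obtain ⟨w, hw⟩ := Set.not_subset.1 hSA; exact ⟨w, hw.1, hw.2⟩)))
  have hxS : x ∈ S := hxSA.1
  have hxA : x ∉ A := hxSA.2
  have hdbp : IsDownBeatPoint S x := by
    by_cases hequiv : ∃ z ∈ S, z ≠ x ∧ specLE z x ∧ specLE x z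
    · obtain ⟨z, hzS, hzx, h1, h2⟩ := hequiv
      exact ⟨hxS, z, hzS, hzx, h1, fun w hwS hwx hw => specLE_trans hw h2⟩
    · push_neg at hequiv
      obtain ⟨t₀, ht₀0, ht₀U⟩ := hsmall ⟨x, hxS⟩
      have hxB : x ∈ B := hBS x hxS
      have hmA : α (⟨x, hxS⟩, t₀) ∈ A :=
        (hdisj _).resolve_left (by rw [hβt ⟨x, hxS⟩ hxB]; exact ht₀0)
      refine ⟨hxS, α (⟨x, hxS⟩, t₀), hαS _, fun he => hxA (by rw [← he]; exact hmA),
        specLE_iff_mem_minOpen.2 ht₀U, ?_⟩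
      intro z hzS hzx hzlex
      by_cases hzA : z ∈ A
      · have h3 := hαle ⟨z, hzS⟩ ⟨x, hxS⟩ hzlex t₀
        rwa [(hAfix ⟨z, hzS⟩ hzA t₀).1] at h3
      · exact absurd (hxmin z ⟨hzS, hzA⟩ hzlex) fun h2 => hequiv z hzS hzx hzlex h2
  -- build RetrData for S \ {x}
  obtain ⟨-, m, hmS, hmx, hmle, hmax⟩ := id hdbp
  classical
  set ρval : ↥S → X := fun s => if (↑s : X) = x then m else ↑s with hρval
  have hmono : ∀ z y : ↥S, specLE z y → specLE (ρval z) (ρval y) := by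
    intro z y hzy
    have hzy' : specLE (z : X) (y : X) := specLE_subtype.1 hzy
    by_cases hz : (↑z : X) = x <;> by_cases hy : (↑y : X) = x
    · simp only [hρval, if_pos hz, if_pos hy]; exact specLE_refl m
    · simp only [hρval, if_pos hz, if_neg hy]; exact specLE_trans hmle (hz ▸ hzy')
    · simp only [hρval, if_neg hz, if_pos hy]; exact hmax ↑z z.2 hz (hy ▸ hzy')
    · simp only [hρval, if_neg hz, if_neg hy]; exact hzy'
  have hρcont : Continuous ρval := monotone_continuous hmono
  have hρmem : ∀ s : ↥S, ρval s ∈ S \ {x} := by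
    intro s
    by_cases hs : (↑s : X) = x
    · simp only [hρval, if_pos hs]; exact ⟨hmS, hmx⟩
    · simp only [hρval, if_neg hs]; exact ⟨s.2, hs⟩
  have hρA : ∀ s : ↥S, (↑s : X) ∈ A → ρval s = ↑s := fun s hs => if_neg (fun he : (↑s : X) = x => hxA (he ▸ hs))
  set ι : ↥(S \ {x}) → ↥S := Set.inclusion Set.diff_subset with hι
  have hιc : Continuous ι := continuous_inclusion _
  set αS : ↥S × I → ↥S := fun p => ⟨α p, hαS p⟩ with hαS'
  have hαSc : Continuous αS := hαc.subtype_mk _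
  have hconn' : ConnectedSpace ↥(S \ {x}) := by
    set ρ : ↥S → ↥(S \ {x}) := fun s => ⟨ρval s, hρmem s⟩ with hρ
    have hρc : Continuous ρ := hρcont.subtype_mk _
    have hsurj : Function.Surjective ρ := by
      intro w
      refine ⟨ι w, Subtype.ext ?_⟩
      simp only [hρ, hρval]
      exact if_neg w.2.2
    exact hsurj.connectedSpace hρc
  have hrec : RetrData A (S \ {x}) := by
    refine ⟨fun p => ρval (αS (ι p.1, p.2)), fun p => β (ι p.1, p.2),
      hρcont.comp (hαSc.comp ((hιc.comp continuous_fst).prodMk continuous_snd)),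
      hβc.comp ((hιc.comp continuous_fst).prodMk continuous_snd), ?_, ?_, ?_, ?_⟩
    · intro p; exact hρmem _
    · intro p
      rcases hdisj (ι p.1, p.2) with h | h
      · exact Or.inl h
      · refine Or.inr ?_
        show ρval (αS (ι p.1, p.2)) ∈ A
        rw [hρA _ h]; exact h
    · intro s
      have h1 : αS (ι s, 0) = ι s := Subtype.ext (hα0 (ι s))
      show ρval (αS (ι s, 0)) = ↑s
      rw [h1]
      exact if_neg s.2.2
    · intro s hsA t
      have h1 : αS (ι s, t) = ι s := Subtype.ext ((hAfix (ι s) hsA t).1)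
      constructor
      · show ρval (αS (ι s, t)) = ↑s
        rw [h1]; exact if_neg s.2.2
      · exact (hAfix (ι s) hsA t).2
  have hcard : ((S \ {x}) \ A).ncard < n := by
    rw [← hn]
    have h1 : (S \ {x}) \ A = (S \ A) \ {x} := by
      ext w; simp only [Set.mem_diff, Set.mem_singleton_iff]; tauto
    rw [h1]
    exact Set.ncard_lt_ncard (Set.ssubset_iff_of_subset Set.diff_subset |>.2
      ⟨x, hxSA, fun h => h.2 rfl⟩) (Set.toFinite _)
  exact IsDbpRetract.step x hdbp (ih _ hcard _ rfl (fun a ha => ⟨hAS ha, fun he => hxA (he ▸ ha)⟩) hconn' hrec)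

lemma retrData_univ {X : Type u} [TopologicalSpace X] [Finite X] (A : Set X)
    (hcof : IsCofibration.{v} (⟨Subtype.val, continuous_subtype_val⟩ : C(A, X))) :
    RetrData A (Set.univ : Set X) := by
  set n := Nat.card X with hn
  set e : X ≃ Fin n := Finite.equivFin X with he
  letI tF : TopologicalSpace (Fin n) := TopologicalSpace.induced (⇑e.symm) ‹_›
  have hesymm : Continuous (⇑e.symm : Fin n → X) := continuous_induced_dom
  have hec : Continuous (⇑e : X → Fin n) := by
    rw [continuous_induced_rng]
    simp only [Function.comp_def, Equiv.symm_apply_apply]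
    exact continuous_id
  set M₀ : Set (Fin n × I) := {p | p.2 = 0 ∨ e.symm p.1 ∈ A} with hM₀
  let Z := ULift.{v} ↥M₀
  have hZdown : Continuous (fun z : Z => z.down) := Homeomorph.ulift.continuous
  have hZup : Continuous (fun m : ↥M₀ => (⟨m⟩ : Z)) := Homeomorph.ulift.symm.continuous
  set f : C(X, Z) := ⟨fun x => ⟨⟨(e x, 0), Or.inl rfl⟩⟩,
    hZup.comp ((hec.prodMk continuous_const).subtype_mk _)⟩ with hf
  set H : C(↥A × I, Z) := ⟨fun p => ⟨⟨(e ↑p.1, p.2), Or.inr (by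
      simp only [hM₀, Set.mem_setOf_eq, Equiv.symm_apply_apply]; exact p.1.2)⟩⟩,
    hZup.comp ((((hec.comp continuous_subtype_val).comp continuous_fst).prodMk
      continuous_snd).subtype_mk _)⟩ with hH
  have hyp : ∀ a : ↥A, H (a, 0) = f ((⟨Subtype.val, continuous_subtype_val⟩ : C(A, X)) a) := by
    intro a
    apply congrArg ULift.up
    apply Subtype.ext
    rfl
  obtain ⟨G, hG0, hGa⟩ := hcof Z f H hyp
  have hgc : Continuous (fun q : X × I => ((G q).down : ↥M₀)) := hZdown.comp G.continuous
  refine ⟨fun p => e.symm ((G (↑p.1, p.2)).down : Fin n × I).1,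
    fun p => ((G (↑p.1, p.2)).down : Fin n × I).2, ?_, ?_, ?_, ?_, ?_, ?_⟩
  · exact hesymm.comp ((continuous_fst.comp (continuous_subtype_val.comp
      (hgc.comp ((continuous_subtype_val.comp continuous_fst).prodMk continuous_snd)))))
  · exact continuous_snd.comp (continuous_subtype_val.comp
      (hgc.comp ((continuous_subtype_val.comp continuous_fst).prodMk continuous_snd)))
  · intro p; trivial
  · intro p
    exact ((G (↑p.1, p.2)).down).2
  · intro s
    show e.symm ((G (↑s, 0)).down : Fin n × I).1 = ↑s
    rw [hG0 ↑s]
    simp only [hf, ContinuousMap.coe_mk, Equiv.symm_apply_apply]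
  · intro s hs t
    have := hGa ⟨↑s, hs⟩ t
    have h2 : ((⟨Subtype.val, continuous_subtype_val⟩ : C(A, X)) ⟨↑s, hs⟩) = ↑s := rfl
    rw [h2] at this
    show e.symm ((G (↑s, t)).down : Fin n × I).1 = ↑s ∧ ((G (↑s, t)).down : Fin n × I).2 = t
    rw [this]
    simp only [hH, ContinuousMap.coe_mk, Equiv.symm_apply_apply]
    exact ⟨trivial, trivial⟩


/-- Let `X` be a connected non-empty finite topological space and `A`
a non-empty subspace. If the inclusion `i : A ↪ X` is a Hurewicz cofibration, then `A`
is a strong deformation retract of `X`; in particular, `i` is a homotopy equivalence. -/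
theorem cofibration_implies_strong_deformation_retract
    {X : Type u} [TopologicalSpace X] [Finite X] [ConnectedSpace X]
    (A : Set X) (hA : A.Nonempty)
    (hcof : IsCofibration (⟨Subtype.val, continuous_subtype_val⟩ : C(A, X))) :
    (∃ F : C(X × I, X),
      (∀ x, F (x, 0) = x) ∧ (∀ x, F (x, 1) ∈ A) ∧ ∀ a ∈ A, ∀ t, F (a, t) = a) ∧
    ∃ g : C(X, A),
      (g.comp (⟨Subtype.val, continuous_subtype_val⟩ : C(A, X))).Homotopic
        (ContinuousMap.id A) ∧
      ((⟨Subtype.val, continuous_subtype_val⟩ : C(A, X)).comp g).Homotopic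
        (ContinuousMap.id X) := by
  have hconn : ConnectedSpace ↥(Set.univ : Set X) :=
    (Homeomorph.Set.univ X).symm.surjective.connectedSpace
      (Homeomorph.Set.univ X).symm.continuous
  have hret : IsDbpRetract (Set.univ : Set X) A :=
    main_dbp A hA Set.univ (Set.subset_univ A) hconn (retrData_univ A hcof)
  obtain ⟨F₀, h0, h1, hfix⟩ := dbp_SDR hret
  set j : C(X × I, ↥(Set.univ : Set X) × I) :=
    ⟨fun p => (⟨p.1, trivial⟩, p.2),
      ((continuous_fst.subtype_mk _).prodMk continuous_snd)⟩ with hj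
  set F : C(X × I, X) := F₀.comp j with hF
  have hF0 : ∀ x, F (x, 0) = x := fun x => h0 ⟨x, trivial⟩
  have hF1 : ∀ x, F (x, 1) ∈ A := fun x => h1 ⟨x, trivial⟩
  have hFfix : ∀ a ∈ A, ∀ t, F (a, t) = a := fun a ha t => hfix ⟨a, trivial⟩ ha t
  refine ⟨⟨F, hF0, hF1, hFfix⟩, ?_⟩
  set g : C(X, ↥A) := ⟨fun x => ⟨F (x, 1), hF1 x⟩,
    ((F.continuous.comp (continuous_id.prodMk continuous_const)).subtype_mk _)⟩ with hg
  refine ⟨g, ?_, ?_⟩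
  · have : g.comp (⟨Subtype.val, continuous_subtype_val⟩ : C(A, X)) = ContinuousMap.id ↥A := by
      ext a
      exact hFfix ↑a a.2 1
    rw [this]
  · set K : ContinuousMap.Homotopy (ContinuousMap.id X)
        ((⟨Subtype.val, continuous_subtype_val⟩ : C(A, X)).comp g) :=
      { toContinuousMap := F.comp ContinuousMap.prodSwap
        map_zero_left := hF0
        map_one_left := fun x => rfl } with hK
    exact ⟨K.symm⟩
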